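/- Let $Q$ be a projection on finite-dimensional system $K$, $P$ a nonnegative operator on $K'$ with $P^2 \le P$, $V$ a unitary on $K\otimes R = K'\otimes R'$, $\rho$ a state on $K$, $\rho_R$ a state on $R$, and $\mathcal{L}(\cdot) = \mathrm{tr}_{R'}[V(\cdot\otimes\rho_R)V^\dagger]$. Define $N = V^\dagger(P\otimes 1_{R'})V - Q\otimes 1_R$. If $\langle\mathcal{L}^\dagger(P)\rangle_{(1-Q)\rho(1-Q)} + \langle 1-\mathcal{L}^\dagger(P)\rangle_{Q\rho Q} = \varepsilon^2$, then $V_{\rho\otimes\rho_R}(N) \le \varepsilon^2$. -/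

import Mathlib

open Matrix
open scoped Kronecker ComplexOrder

variable {n m : Type*} [Fintype n] [DecidableEq n] [Fintype m] [DecidableEq m]

open Classical in
/-- square root of a matrix (zero if not PSD) -/
noncomputable def msqrt (A : Matrix n n ℂ) : Matrix n n ℂ :=
  if h : A.PosSemidef then
    (h.1.eigenvectorUnitary : Matrix n n ℂ) * diagonal ((↑) ∘ (Real.sqrt ∘ h.1.eigenvalues)) *
      (star h.1.eigenvectorUnitary : Matrix n n ℂ) else 0

/-- trace norm -/
noncomputable def traceNorm (X : Matrix n m ℂ) : ℝ :=
  ((msqrt (Xᴴ * X)).trace).re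

def IsDensity (ρ : Matrix n n ℂ) : Prop := ρ.PosSemidef ∧ ρ.trace = 1

noncomputable def variance (σ A : Matrix n n ℂ) : ℝ :=
  (Matrix.trace (σ * (A * A))).re - ((Matrix.trace (σ * A)).re) ^ 2

/-- `L` is a symmetric logarithmic derivative for `(σ, W)`. -/
def IsSLD (σ W L : Matrix n n ℂ) : Prop :=
  L.IsHermitian ∧ L * σ + σ * L = ((-2 : ℂ) * Complex.I) • (W * σ - σ * W)

/-- SLD Fisher information value associated with a given SLD `L`. -/
noncomputable def fisherVal (σ L : Matrix n n ℂ) : ℝ :=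
  (Matrix.trace (σ * (L * L))).re

noncomputable def fidelity (ρ σ : Matrix n n ℂ) : ℝ :=
  ((msqrt (msqrt ρ * σ * msqrt ρ)).trace).re

noncomputable def purifiedDist (ρ σ : Matrix n n ℂ) : ℝ :=
  Real.sqrt (1 - fidelity ρ σ ^ 2)

/-- completely positive -/
def IsCompletelyPositive (Φ : Matrix n n ℂ →ₗ[ℂ] Matrix m m ℂ) : Prop :=
  ∀ (k : ℕ) (M : Matrix (Fin k × n) (Fin k × n) ℂ), M.PosSemidef →
    (Matrix.of fun (p q : Fin k × m) => (Φ (Matrix.of fun i j => M (p.1, i) (q.1, j))) p.2 q.2).PosSemidef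

def IsCPTP (Φ : Matrix n n ℂ →ₗ[ℂ] Matrix m m ℂ) : Prop :=
  IsCompletelyPositive Φ ∧ ∀ X, (Φ X).trace = X.trace

/-- partial trace over the second factor -/
noncomputable def ptraceR {k r : Type*} [Fintype k] [Fintype r]
    (M : Matrix (k × r) (k × r) ℂ) : Matrix k k ℂ :=
  Matrix.of fun i j => ∑ a : r, M (i, a) (j, a)



section AuxLemmas

variable {a b : Type*} [Fintype a] [Fintype b]

lemma aux_sub_kronecker (A B : Matrix a a ℂ) (C : Matrix b b ℂ) :
    (A - B) ⊗ₖ C = A ⊗ₖ C - B ⊗ₖ C := by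
  ext ⟨i, j⟩ ⟨p, q⟩
  simp [Matrix.kroneckerMap_apply, sub_mul]

lemma aux_kron_conjTranspose (A : Matrix a a ℂ) (B : Matrix b b ℂ) :
    (A ⊗ₖ B)ᴴ = Aᴴ ⊗ₖ Bᴴ := by
  ext ⟨i, j⟩ ⟨p, q⟩
  simp [Matrix.conjTranspose_apply, Matrix.kroneckerMap_apply]

lemma aux_posSemidef_kron {A : Matrix a a ℂ} {B : Matrix b b ℂ}
    (hA : A.PosSemidef) (hB : B.PosSemidef) : (A ⊗ₖ B).PosSemidef := by
  obtain ⟨C, hC⟩ : ∃ C : Matrix a a ℂ, A = Cᴴ * C := by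
    classical
    open scoped MatrixOrder in exact CStarAlgebra.nonneg_iff_eq_star_mul_self.mp (hA.nonneg)
  obtain ⟨D, hD⟩ : ∃ D : Matrix b b ℂ, B = Dᴴ * D := by
    classical
    open scoped MatrixOrder in exact CStarAlgebra.nonneg_iff_eq_star_mul_self.mp (hB.nonneg)
  rw [hC, hD, Matrix.mul_kronecker_mul, ← aux_kron_conjTranspose]
  exact Matrix.posSemidef_conjTranspose_mul_self _

lemma aux_re_trace_nonneg [DecidableEq a] {A : Matrix a a ℂ} (hA : A.PosSemidef) :
    0 ≤ (A.trace).re := by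
  rw [Matrix.trace, Complex.re_sum]
  refine Finset.sum_nonneg fun i _ => ?_
  have h := hA.dotProduct_mulVec_nonneg (Pi.single i 1)
  have hs : star (Pi.single i (1 : ℂ)) ⬝ᵥ A.mulVec (Pi.single i 1) = A i i := by
    simp [dotProduct, Matrix.mulVec, Pi.single_apply, apply_ite, Finset.sum_ite_eq]
  rw [hs] at h
  simpa [Matrix.diag] using (Complex.nonneg_iff.mp h).1

lemma aux_re_trace_mul_nonneg [DecidableEq a] {A B : Matrix a a ℂ}
    (hA : A.PosSemidef) (hB : B.PosSemidef) : 0 ≤ (Matrix.trace (A * B)).re := by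
  obtain ⟨C, hC⟩ : ∃ C : Matrix a a ℂ, B = Cᴴ * C := by
    open scoped MatrixOrder in exact CStarAlgebra.nonneg_iff_eq_star_mul_self.mp (hB.nonneg)
  have h : Matrix.trace (A * B) = Matrix.trace (C * A * Cᴴ) := by
    rw [hC, ← Matrix.mul_assoc, Matrix.trace_mul_comm, ← Matrix.mul_assoc]
  rw [h]
  exact aux_re_trace_nonneg (hA.mul_mul_conjTranspose_same C)

lemma aux_trace_identity {d : Type*} [Fintype d] [DecidableEq d]
    (σ M Pr : Matrix d d ℂ) (hPr : Pr * Pr = Pr) :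
    Matrix.trace (σ * ((M - Pr) * (M - Pr))) + Matrix.trace ((M - M * M) * σ)
    = Matrix.trace (M * ((1 - Pr) * σ * (1 - Pr))) + Matrix.trace ((1 - M) * (Pr * σ * Pr)) := by
  have e1 : Matrix.trace (σ * (M * M)) = Matrix.trace (M * (M * σ)) := by
    rw [Matrix.trace_mul_comm, Matrix.mul_assoc]
  have e2 : Matrix.trace (σ * (M * Pr)) = Matrix.trace (M * (Pr * σ)) := by
    rw [Matrix.trace_mul_comm, Matrix.mul_assoc]
  have e3 : Matrix.trace (σ * (Pr * M)) = Matrix.trace (M * (σ * Pr)) := by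
    rw [← Matrix.mul_assoc, Matrix.trace_mul_comm]
  have e4 : Matrix.trace (Pr * (σ * Pr)) = Matrix.trace (σ * Pr) := by
    rw [Matrix.trace_mul_comm, Matrix.mul_assoc, hPr]
  have e5 : Matrix.trace (σ * (Pr * Pr)) = Matrix.trace (σ * Pr) := by rw [hPr]
  simp only [sub_mul, mul_sub, one_mul, mul_one, Matrix.trace_sub, Matrix.mul_assoc]
  linear_combination e1 - e2 - e3 - e4 + e5

end AuxLemmas

/-- Variance bound for `N = V†(P⊗1)V - Q⊗1` in terms of the measurement error ε. -/
theorem variance_N_le_epsilon_sq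
    {k r k' r' : Type*} [Fintype k] [DecidableEq k] [Fintype r] [DecidableEq r]
    [Fintype k'] [DecidableEq k'] [Fintype r'] [DecidableEq r']
    (V : Matrix (k' × r') (k × r) ℂ) (hV1 : Vᴴ * V = 1) (hV2 : V * Vᴴ = 1)
    (Q : Matrix k k ℂ) (hQh : Q.IsHermitian) (hQp : Q * Q = Q)
    (P : Matrix k' k' ℂ) (hP : P.PosSemidef) (hP2 : (P - P * P).PosSemidef)
    (ρ : Matrix k k ℂ) (hρ : IsDensity ρ) (ρR : Matrix r r ℂ) (hρR : IsDensity ρR)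
    (ε : ℝ)
    (hε : (Matrix.trace ((P ⊗ₖ (1 : Matrix r' r' ℂ)) *
            (V * ((((1 - Q) * ρ * (1 - Q)) ⊗ₖ ρR)) * Vᴴ))).re +
          (Matrix.trace (((1 : Matrix (k' × r') (k' × r') ℂ) - P ⊗ₖ (1 : Matrix r' r' ℂ)) *
            (V * (((Q * ρ * Q) ⊗ₖ ρR)) * Vᴴ))).re = ε ^ 2) :
    variance (ρ ⊗ₖ ρR)
      (Vᴴ * (P ⊗ₖ (1 : Matrix r' r' ℂ)) * V - Q ⊗ₖ (1 : Matrix r r ℂ)) ≤ ε ^ 2 := by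
  classical
  set σ : Matrix (k × r) (k × r) ℂ := ρ ⊗ₖ ρR with hσ
  set M : Matrix (k × r) (k × r) ℂ := Vᴴ * (P ⊗ₖ (1 : Matrix r' r' ℂ)) * V with hM
  set Pr : Matrix (k × r) (k × r) ℂ := Q ⊗ₖ (1 : Matrix r r ℂ) with hPrdef
  have hPr : Pr * Pr = Pr := by
    rw [hPrdef, ← Matrix.mul_kronecker_mul, hQp, one_mul]
  have h1q : (1 - Q) ⊗ₖ (1 : Matrix r r ℂ) = 1 - Pr := by
    rw [aux_sub_kronecker, Matrix.one_kronecker_one, hPrdef]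
  have hX : ((1 - Q) * ρ * (1 - Q)) ⊗ₖ ρR = (1 - Pr) * σ * (1 - Pr) := by
    rw [← h1q, hσ, ← Matrix.mul_kronecker_mul, ← Matrix.mul_kronecker_mul, one_mul, mul_one]
  have hY : (Q * ρ * Q) ⊗ₖ ρR = Pr * σ * Pr := by
    rw [hPrdef, hσ, ← Matrix.mul_kronecker_mul, ← Matrix.mul_kronecker_mul, one_mul, mul_one]
  have tr1 : ∀ X : Matrix (k × r) (k × r) ℂ,
      Matrix.trace ((P ⊗ₖ (1 : Matrix r' r' ℂ)) * (V * X * Vᴴ)) = Matrix.trace (M * X) := by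
    intro X
    rw [hM, ← Matrix.mul_assoc, Matrix.trace_mul_cycle, ← Matrix.mul_assoc]
  have trV : ∀ X : Matrix (k × r) (k × r) ℂ,
      Matrix.trace (V * X * Vᴴ) = Matrix.trace X := by
    intro X
    rw [Matrix.trace_mul_cycle, hV1, one_mul]
  have tr2 : ∀ X : Matrix (k × r) (k × r) ℂ,
      Matrix.trace (((1 : Matrix (k' × r') (k' × r') ℂ) - P ⊗ₖ (1 : Matrix r' r' ℂ))
        * (V * X * Vᴴ)) = Matrix.trace (((1 : Matrix (k × r) (k × r) ℂ) - M) * X) := by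
    intro X
    rw [Matrix.sub_mul, Matrix.sub_mul, one_mul, one_mul, Matrix.trace_sub, Matrix.trace_sub,
      tr1, trV]
  rw [hX, hY, tr1, tr2] at hε
  have key := aux_trace_identity σ M Pr hPr
  have hre := congrArg Complex.re key
  simp only [Complex.add_re] at hre
  have h2 : M * M = Vᴴ * ((P * P) ⊗ₖ (1 : Matrix r' r' ℂ)) * V := by
    rw [hM]
    calc Vᴴ * (P ⊗ₖ (1 : Matrix r' r' ℂ)) * V * (Vᴴ * (P ⊗ₖ (1 : Matrix r' r' ℂ)) * V)
        = Vᴴ * (P ⊗ₖ (1 : Matrix r' r' ℂ)) * (V * Vᴴ) * ((P ⊗ₖ (1 : Matrix r' r' ℂ)) * V) := by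
          simp only [Matrix.mul_assoc]
      _ = Vᴴ * (P ⊗ₖ (1 : Matrix r' r' ℂ)) * ((P ⊗ₖ (1 : Matrix r' r' ℂ)) * V) := by
          rw [hV2, Matrix.mul_one]
      _ = Vᴴ * ((P ⊗ₖ (1 : Matrix r' r' ℂ)) * (P ⊗ₖ (1 : Matrix r' r' ℂ))) * V := by
          simp only [Matrix.mul_assoc]
      _ = Vᴴ * ((P * P) ⊗ₖ (1 : Matrix r' r' ℂ)) * V := by
          rw [← Matrix.mul_kronecker_mul, one_mul]
  have hMM : M - M * M = Vᴴ * ((P - P * P) ⊗ₖ (1 : Matrix r' r' ℂ)) * V := by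
    rw [h2, hM, aux_sub_kronecker, Matrix.mul_sub, Matrix.sub_mul]
  have hpsd1 : ((P - P * P) ⊗ₖ (1 : Matrix r' r' ℂ)).PosSemidef :=
    aux_posSemidef_kron hP2 Matrix.PosSemidef.one
  have hpsd2 : (M - M * M).PosSemidef := by
    rw [hMM]
    have h := hpsd1.mul_mul_conjTranspose_same Vᴴ
    rwa [Matrix.conjTranspose_conjTranspose] at h
  have hσpsd : σ.PosSemidef := aux_posSemidef_kron hρ.1 hρR.1
  have hnn : 0 ≤ (Matrix.trace ((M - M * M) * σ)).re :=
    aux_re_trace_mul_nonneg hpsd2 hσpsd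
  have hsq := sq_nonneg ((Matrix.trace (σ * (M - Pr))).re)
  simp only [variance]
  linarith
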